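/- For any two vectors u, w in ℂ^d of norm 1 each supported on disjoint index sets Ω₀, Ω₁ of sizes d₀, d₁, and any unitary U of the paper's spectral form (a sum over common eigenvalues λ of rank-one projectors onto vectors y^{(a)}_λ = Σ_j β_{a,j} v_j^{(λ)} where each v_j^{(λ)} has all entries of modulus 1/√d_j on Ω_j and the β-matrix is unitary), the matrix element satisfies |⟨w|U|u⟩| ≤ |σ| / √(d₀ d₁), where σ is the set of eigenvalues common to both cycles. -/

import Mathlib

/-- For basis vectors `u = |l₀⟩`, `w = |l₁⟩` supported on disjoint cycle index sets
`Ω₀, Ω₁` of sizes `d₀, d₁`, and a unitary `U` of the paper's spectral form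
`U = Σ_{λ∈σ} Σ_a c_λ^{(a)} |y_λ^{(a)}⟩⟨y_λ^{(a)}|` with unimodular `c`'s
(`c_λ^{(a)} = e^{-iε_λ^{(a)} t}`), where `y_λ^{(a)} = Σ_j β_{a,j}^{(λ)} v_j^{(λ)}`, each
cycle eigenvector `v_j^{(λ)}` is supported on `Ω_j` with all entries of modulus `1/√d_j`
there, and the `β`-coefficients satisfy the column normalization `Σ_a |β_{a,j}^{(λ)}|² = 1`,
the matrix element satisfies `|⟨w|U|u⟩| ≤ |σ| / √(d₀ d₁)`, where `σ` is the set of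
eigenvalues common to both cycles. -/
theorem stmt_7 {d : ℕ}
    (Ω₀ Ω₁ : Finset (Fin d)) (hdisj : Disjoint Ω₀ Ω₁)
    (d₀ d₁ : ℕ) (hd₀ : Ω₀.card = d₀) (hd₁ : Ω₁.card = d₁)
    (hd₀pos : 0 < d₀) (hd₁pos : 0 < d₁)
    (l₀ l₁ : Fin d) (hl₀ : l₀ ∈ Ω₀) (hl₁ : l₁ ∈ Ω₁)
    (u w : Fin d → ℂ) (hu : u = Pi.single l₀ 1) (hw : w = Pi.single l₁ 1)
    (σ : Finset ℂ) (η : ℂ → ℕ)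
    (v : Fin 2 → ℂ → (Fin d → ℂ))
    (hv₀mod : ∀ lam ∈ σ, ∀ k ∈ Ω₀, ‖v 0 lam k‖ = 1 / Real.sqrt d₀)
    (hv₁mod : ∀ lam ∈ σ, ∀ k ∈ Ω₁, ‖v 1 lam k‖ = 1 / Real.sqrt d₁)
    (hv₀supp : ∀ lam ∈ σ, ∀ k : Fin d, k ∉ Ω₀ → v 0 lam k = 0)
    (hv₁supp : ∀ lam ∈ σ, ∀ k : Fin d, k ∉ Ω₁ → v 1 lam k = 0)
    (β : (lam : ℂ) → Fin (η lam) → Fin 2 → ℂ)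
    (hβ : ∀ lam ∈ σ, ∀ j : Fin 2, ∑ a : Fin (η lam), ‖β lam a j‖ ^ 2 = 1)
    (y : (lam : ℂ) → Fin (η lam) → (Fin d → ℂ))
    (hy : ∀ lam ∈ σ, ∀ a : Fin (η lam),
      y lam a = β lam a 0 • v 0 lam + β lam a 1 • v 1 lam)
    (hyortho : ∀ lam ∈ σ, ∀ lam' ∈ σ, ∀ (a : Fin (η lam)) (a' : Fin (η lam')),
      dotProduct (star (y lam a)) (y lam' a') =
        if lam = lam' ∧ (a : ℕ) = (a' : ℕ) then 1 else 0)
    (c : (lam : ℂ) → Fin (η lam) → ℂ)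
    (hc : ∀ lam ∈ σ, ∀ a : Fin (η lam), ‖c lam a‖ = 1)
    (U : Matrix (Fin d) (Fin d) ℂ)
    (hU : U = ∑ lam ∈ σ, ∑ a : Fin (η lam),
      c lam a • Matrix.vecMulVec (y lam a) (star (y lam a))) :
    ‖dotProduct (star w) (U.mulVec u)‖ ≤
      (σ.card : ℝ) / Real.sqrt (d₀ * d₁) := by
  have hl₀₁ : l₀ ∉ Ω₁ := Finset.disjoint_left.mp hdisj hl₀
  have hl₁₀ : l₁ ∉ Ω₀ := Finset.disjoint_right.mp hdisj hl₁
  have hval : dotProduct (star w) (U.mulVec u) =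
      ∑ lam ∈ σ, ∑ a : Fin (η lam), c lam a * (y lam a l₁ * star (y lam a l₀)) := by
    subst hu hw hU
    simp [dotProduct, Matrix.mulVec, Matrix.sum_apply, Matrix.vecMulVec_apply,
      Pi.single_apply, Finset.mul_sum, Finset.sum_mul, apply_ite, mul_comm, mul_assoc]
  rw [hval]
  have key : ∀ lam ∈ σ, ‖∑ a : Fin (η lam),
      c lam a * (y lam a l₁ * star (y lam a l₀))‖ ≤ 1 / Real.sqrt (d₀ * d₁) := by
    intro lam hlam
    have h1 : ∀ a : Fin (η lam),
        ‖c lam a * (y lam a l₁ * star (y lam a l₀))‖ =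
        ‖β lam a 1‖ * ‖β lam a 0‖ / Real.sqrt (d₀ * d₁) := by
      intro a
      have hy1 : y lam a l₁ = β lam a 1 * v 1 lam l₁ := by
        rw [hy lam hlam a]; simp [hv₀supp lam hlam l₁ hl₁₀]
      have hy0 : y lam a l₀ = β lam a 0 * v 0 lam l₀ := by
        rw [hy lam hlam a]; simp [hv₁supp lam hlam l₀ hl₀₁]
      rw [norm_mul, hc lam hlam a, one_mul, norm_mul,
        show star (y lam a l₀) = (starRingEnd ℂ) (y lam a l₀) from rfl, Complex.norm_conj,
        hy1, hy0, norm_mul, norm_mul, hv₁mod lam hlam l₁ hl₁, hv₀mod lam hlam l₀ hl₀,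
        Real.sqrt_mul (by positivity)]
      rw [mul_one_div, mul_one_div, div_mul_div_comm, mul_comm (Real.sqrt d₁) (Real.sqrt d₀)]
    calc ‖∑ a : Fin (η lam), c lam a * (y lam a l₁ * star (y lam a l₀))‖
        ≤ ∑ a : Fin (η lam), ‖c lam a * (y lam a l₁ * star (y lam a l₀))‖ :=
          norm_sum_le _ _
      _ = (∑ a : Fin (η lam), ‖β lam a 1‖ * ‖β lam a 0‖) /
            Real.sqrt (d₀ * d₁) := by
          rw [Finset.sum_div]; exact Finset.sum_congr rfl fun a _ => h1 a
      _ ≤ 1 / Real.sqrt (d₀ * d₁) := by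
          gcongr
          calc ∑ a : Fin (η lam), ‖β lam a 1‖ * ‖β lam a 0‖
              ≤ Real.sqrt (∑ a : Fin (η lam), ‖β lam a 1‖ ^ 2) *
                Real.sqrt (∑ a : Fin (η lam), ‖β lam a 0‖ ^ 2) :=
                Real.sum_mul_le_sqrt_mul_sqrt _ _ _
            _ = 1 := by rw [hβ lam hlam 1, hβ lam hlam 0]; simp
  calc ‖∑ lam ∈ σ, ∑ a : Fin (η lam), c lam a * (y lam a l₁ * star (y lam a l₀))‖
      ≤ ∑ lam ∈ σ, ‖∑ a : Fin (η lam), c lam a * (y lam a l₁ * star (y lam a l₀))‖ :=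
        norm_sum_le _ _
    _ ≤ ∑ lam ∈ σ, 1 / Real.sqrt (d₀ * d₁) := Finset.sum_le_sum key
    _ = σ.card / Real.sqrt (d₀ * d₁) := by rw [Finset.sum_const, nsmul_eq_mul, mul_one_div]
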